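/- Let E be a phase observable with phase matrix (c_{n,m}) and N = ∑ n|n⟩⟨n| the number observable with spectral projections P_n = |n⟩⟨n|. Then the set com(N,E) of vectors φ satisfying P_n E(X) φ = E(X) P_n φ for all n ∈ ℕ and all Borel X ⊆ [0,2π) equals {φ : ⟨n|φ⟩ = 0 whenever c_{n,m} ≠ 0 for some m ≠ n}. -/

import Mathlib

open MeasureTheory Complex

/-- `phaseInt X n m = (1/2π) ∫_X e^{i(n-m)x} dx`. -/
noncomputable def phaseInt (X : Set ℝ) (n m : ℕ) : ℂ :=
  ((1 / (2 * Real.pi) : ℝ) : ℂ) *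
    ∫ x in X, Complex.exp (Complex.I * ((n : ℂ) - (m : ℂ)) * (x : ℂ))

lemma exp_I_int_ne_one {k : ℤ} (hk : k ≠ 0) : Complex.exp (Complex.I * k) ≠ 1 := by
  intro h
  rw [Complex.exp_eq_one_iff] at h
  obtain ⟨j, hj⟩ := h
  have h2 : (k : ℂ) = j * (2 * Real.pi) := by
    have : (k : ℂ) * Complex.I = (j * (2 * Real.pi)) * Complex.I := by ring_nf; ring_nf at hj; linear_combination hj
    exact mul_right_cancel₀ Complex.I_ne_zero this
  have h3 : (k : ℝ) = j * (2 * Real.pi) := by exact_mod_cast congrArg Complex.re h2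
  have hj0 : j ≠ 0 := by
    rintro rfl
    simp at h3
    exact hk (by exact_mod_cast h3)
  have hq : Real.pi = (((k : ℚ) / (2 * j) : ℚ) : ℝ) := by
    have h2j : (2 * (j:ℝ)) ≠ 0 := by positivity
    push_cast
    rw [eq_div_iff h2j]
    linarith [h3]
  exact (Rat.not_irrational _) (hq ▸ irrational_pi)

lemma phaseInt_Ioc_ne_zero {n m : ℕ} (h : n ≠ m) : phaseInt (Set.Ioc 0 1) n m ≠ 0 := by
  have hnm : ((n : ℂ) - m) = (((n : ℤ) - m : ℤ) : ℂ) := by push_cast; ring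
  have hk : ((n : ℤ) - m) ≠ 0 := by intro hh; exact h (by omega)
  have hcne : (Complex.I * ((n : ℂ) - m)) ≠ 0 := by
    rw [hnm]
    exact mul_ne_zero Complex.I_ne_zero (by exact_mod_cast hk)
  have hint : (∫ x in Set.Ioc (0:ℝ) 1, Complex.exp (Complex.I * ((n : ℂ) - m) * x))
      = (Complex.exp (Complex.I * ((n : ℂ) - m)) - 1) / (Complex.I * ((n : ℂ) - m)) := by
    rw [← intervalIntegral.integral_of_le (by norm_num : (0:ℝ) ≤ 1),
      integral_exp_mul_complex hcne]
    simp
  unfold phaseInt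
  rw [hint]
  apply mul_ne_zero
  · simp [Real.pi_ne_zero]
  · apply div_ne_zero _ hcne
    rw [sub_ne_zero, hnm]
    exact exp_I_int_ne_one hk

lemma hb_ext {H : Type*} [NormedAddCommGroup H] [InnerProductSpace ℂ H] [CompleteSpace H]
    (e : HilbertBasis ℕ ℂ H) {x y : H}
    (h : ∀ i, (inner ℂ (e i) x : ℂ) = inner ℂ (e i) y) : x = y := by
  apply e.repr.injective
  ext i
  rw [e.repr_apply_apply, e.repr_apply_apply]
  exact h i

lemma hb_hasSum {H : Type*} [NormedAddCommGroup H] [InnerProductSpace ℂ H] [CompleteSpace H]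
    (e : HilbertBasis ℕ ℂ H) (T : H →L[ℂ] H) (n : ℕ) (φ : H) :
    HasSum (fun m => (inner ℂ (e m) φ : ℂ) * (inner ℂ (e n) (T (e m)) : ℂ))
      (inner ℂ (e n) (T φ) : ℂ) := by
  have h := (e.hasSum_repr φ).mapL ((innerSL ℂ (e n)).comp T)
  simpa [e.repr_apply_apply, inner_smul_right] using h

theorem stmt12 {H : Type*} [NormedAddCommGroup H] [InnerProductSpace ℂ H] [CompleteSpace H]
    (e : HilbertBasis ℕ ℂ H) (ξ : ℕ → H) (hξ : ∀ n, ‖ξ n‖ = 1)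
    (c : ℕ → ℕ → ℂ) (hc : ∀ n m, c n m = (inner ℂ (ξ n) (ξ m) : ℂ))
    (E : Set ℝ → (H →L[ℂ] H))
    (hE : ∀ X : Set ℝ, MeasurableSet X → X ⊆ Set.Ico 0 (2 * Real.pi) → ∀ n m : ℕ,
      (inner ℂ (e n) (E X (e m)) : ℂ) = c n m * phaseInt X n m)
    (φ : H) :
    (∀ (n : ℕ) (X : Set ℝ), MeasurableSet X → X ⊆ Set.Ico 0 (2 * Real.pi) →
      (inner ℂ (e n) (E X φ) : ℂ) • (e n : H) = E X ((inner ℂ (e n) φ : ℂ) • (e n : H)))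
    ↔ (∀ n : ℕ, (∃ m : ℕ, m ≠ n ∧ c n m ≠ 0) → (inner ℂ (e n) φ : ℂ) = 0) := by
  have hco : ∀ a b : ℕ, c a b = starRingEnd ℂ (c b a) := by
    intro a b; rw [hc, hc, inner_conj_symm]
  have horth : ∀ i j : ℕ, (inner ℂ (e i) (e j) : ℂ) = if i = j then 1 else 0 := by
    intro i j
    exact orthonormal_iff_ite.mp e.orthonormal i j
  constructor
  · rintro h n ⟨m, hmn, hcnm⟩
    set X := Set.Ioc (0:ℝ) 1 with hXdef
    have hX : MeasurableSet X := measurableSet_Ioc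
    have hXsub : X ⊆ Set.Ico 0 (2 * Real.pi) := by
      intro x hx
      exact ⟨hx.1.le, lt_of_le_of_lt hx.2 (by linarith [Real.pi_gt_three])⟩
    have key := congrArg (fun v => (inner ℂ (e m) v : ℂ)) (h n X hX hXsub)
    simp only [inner_smul_right, (E X).map_smul] at key
    rw [horth m n, if_neg hmn, hE X hX hXsub m n] at key
    have hmn0 : c m n ≠ 0 := by
      rw [hco m n]
      simpa using hcnm
    have hpi : phaseInt X m n ≠ 0 := phaseInt_Ioc_ne_zero hmn
    have := key.symm
    simp only [mul_zero] at this
    rcases mul_eq_zero.mp this with h1 | h2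
    · exact h1
    · exact absurd h2 (mul_ne_zero hmn0 hpi)
  · intro h n X hX hXsub
    have hsum := hb_hasSum e (E X) n φ
    by_cases hn : ∃ m, m ≠ n ∧ c n m ≠ 0
    · have hφn : (inner ℂ (e n) φ : ℂ) = 0 := h n hn
      have hz : ∀ m, (inner ℂ (e m) φ : ℂ) * (inner ℂ (e n) ((E X) (e m)) : ℂ) = 0 := by
        intro m
        rcases eq_or_ne m n with rfl | hm
        · rw [hφn, zero_mul]
        · by_cases hcm : c n m = 0
          · rw [hE X hX hXsub n m, hcm, zero_mul, mul_zero]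
          · have hmn0 : c m n ≠ 0 := by rw [hco m n]; simpa using hcm
            rw [h m ⟨n, hm.symm, hmn0⟩, zero_mul]
      have h0 : (inner ℂ (e n) ((E X) φ) : ℂ) = 0 :=
        hsum.unique (by simpa [funext hz] using (hasSum_zero : HasSum (fun _ : ℕ => (0:ℂ)) 0))
      rw [h0, hφn]
      simp
    · push_neg at hn
      apply hb_ext e
      intro i
      rw [inner_smul_right, (E X).map_smul, inner_smul_right, horth i n,
        hE X hX hXsub i n]
      rcases eq_or_ne i n with rfl | hi
      · simp only [if_pos rfl, mul_one]
        have hfun : (fun m => (inner ℂ (e m) φ : ℂ) * (inner ℂ (e i) ((E X) (e m)) : ℂ))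
            = fun m => if m = i then (inner ℂ (e i) φ : ℂ) * (c i i * phaseInt X i i) else 0 := by
          funext m
          rcases eq_or_ne m i with rfl | hm
          · rw [if_pos rfl, hE X hX hXsub m m]
          · rw [if_neg hm, hE X hX hXsub i m, hn m hm, zero_mul, mul_zero]
        have := hsum
        rw [hfun] at this
        have h2 := this.unique (hasSum_ite_eq i ((inner ℂ (e i) φ : ℂ) * (c i i * phaseInt X i i)))
        rw [h2]
        simp
      · rw [if_neg hi, mul_zero]
        rw [hco i n, hn i hi]
        simp
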